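/- Assume (H1), (H3), (H4), and that Π maps 𝔄(q) onto H⁻ for every q ∈ Q, so that the map Φ : Q × H⁻ → H is well-defined. If the driving system is the shift on ℝ, i.e. Q = ℝ and ϑ^t(q) = q + t for all t, q ∈ ℝ, then Φ is continuous. -/

import Mathlib

open MeasureTheory Set Bornology Filter Topology RealInnerProductSpace

noncomputable section

variable {Q H : Type*}

section Defs
variable [MetricSpace Q] [NormedAddCommGroup H] [InnerProductSpace ℝ H] [CompleteSpace H]

def IsFlow (ϑ : ℝ → Q → Q) : Prop :=
  (∀ q, ϑ 0 q = q) ∧ (∀ t s q, ϑ (t + s) q = ϑ t (ϑ s q)) ∧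
    Continuous fun p : ℝ × Q => ϑ p.1 p.2

def IsCocycle (ϑ : ℝ → Q → Q) (ψ : ℝ → Q → H → H) : Prop :=
  (∀ q u, ψ 0 q u = u) ∧
  (∀ t s : ℝ, 0 ≤ t → 0 ≤ s → ∀ q u, ψ (t + s) q u = ψ t (ϑ s q) (ψ s q u)) ∧
  ContinuousOn (fun p : ℝ × Q × H => ψ p.1 p.2.1 p.2.2) {p : ℝ × Q × H | 0 ≤ p.1}

def IsCompleteTraj (ϑ : ℝ → Q → Q) (ψ : ℝ → Q → H → H) (q : Q) (u : ℝ → H) : Prop :=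
  Continuous u ∧ ∀ t s : ℝ, 0 ≤ t → u (t + s) = ψ t (ϑ s q) (u s)

def IsAmenable (ν : ℝ) (u : ℝ → H) : Prop :=
  IntegrableOn (fun s : ℝ => Real.exp (2 * ν * s) * ‖u s‖ ^ 2) (Set.Iic (0:ℝ))

def amenSet (ϑ : ℝ → Q → Q) (ψ : ℝ → Q → H → H) (ν : ℝ) (q : Q) : Set H :=
  {u₀ | ∃ u : ℝ → H, IsCompleteTraj ϑ ψ q u ∧ IsAmenable ν u ∧ u 0 = u₀}

structure HypH1 (P : H →L[ℝ] H) (Hplus Hminus : Submodule ℝ H) : Prop where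
  selfAdj : IsSelfAdjoint P
  closed_plus : IsClosed (Hplus : Set H)
  orth : Hminus = Hplusᗮ
  inv_plus : ∀ u ∈ Hplus, P u ∈ Hplus
  inv_minus : ∀ u ∈ Hminus, P u ∈ Hminus
  pos : ∀ u ∈ Hplus, u ≠ 0 → (0:ℝ) < ⟪P u, u⟫
  neg : ∀ u ∈ Hminus, u ≠ 0 → ⟪P u, u⟫ < 0

def HypH2 (Hminus : Submodule ℝ H) (j : ℕ) : Prop :=
  FiniteDimensional ℝ Hminus ∧ Module.finrank ℝ Hminus = j

def HypH3 (ψ : ℝ → Q → H → H) (P : H →L[ℝ] H) (δ ν : ℝ) : Prop :=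
  0 < δ ∧ 0 < ν ∧ ∀ (q : Q) (u v : H) (l r : ℝ), 0 ≤ l → l ≤ r →
    Real.exp (2 * ν * r) * ⟪P (ψ r q u - ψ r q v), ψ r q u - ψ r q v⟫ -
      Real.exp (2 * ν * l) * ⟪P (ψ l q u - ψ l q v), ψ l q u - ψ l q v⟫ ≤
      -δ * ∫ s in l..r, Real.exp (2 * ν * s) * ‖ψ s q u - ψ s q v‖ ^ 2

def IsOrthProjOnto (Hminus : Submodule ℝ H) (Pi : H →L[ℝ] H) : Prop :=
  (∀ u, Pi u ∈ Hminus) ∧ ∀ u, u - Pi u ∈ Hminusᗮ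

def HypCOM2 (ψ : ℝ → Q → H → H) : Prop :=
  ∃ tc : ℝ, 0 < tc ∧ ∀ (q : Q) (s : Set H), IsBounded s → IsCompact (closure (ψ tc q '' s))

def HypCOM3 (ψ : ℝ → Q → H → H) : Prop :=
  ∀ (q : Q) (u₀ : H), IsBounded ((fun t => ψ t q u₀) '' Set.Ici (0:ℝ)) →
    IsCompact (closure ((fun t => ψ t q u₀) '' Set.Ici (0:ℝ)))

def LyapunovStable (ψ : ℝ → Q → H → H) (q : Q) (v : ℝ → H) : Prop :=
  ∀ ε > 0, ∃ η > 0, ∀ u₀ : H, ‖u₀ - v 0‖ < η → ∀ t ≥ 0, ‖ψ t q u₀ - v t‖ < ε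

end Defs

def circleFlow (σ : ℝ) : ℝ → AddCircle σ → AddCircle σ := fun t θ => θ + (t : AddCircle σ)

section AuxLemmas
variable {H : Type*} [NormedAddCommGroup H] [InnerProductSpace ℝ H] [CompleteSpace H]

lemma absV_le' (P : H →L[ℝ] H) (x : H) : |⟪P x, x⟫| ≤ ‖P‖ * ‖x‖ ^ 2 := by
  calc |⟪P x, x⟫| ≤ ‖P x‖ * ‖x‖ := abs_real_inner_le_norm _ _
  _ ≤ (‖P‖ * ‖x‖) * ‖x‖ := mul_le_mul_of_nonneg_right (P.le_opNorm x) (norm_nonneg _)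
  _ = ‖P‖ * ‖x‖ ^ 2 := by ring

lemma V_ge {P : H →L[ℝ] H} {Hplus Hminus : Submodule ℝ H} (h1 : HypH1 P Hplus Hminus)
    {Pi : H →L[ℝ] H} (hPi : IsOrthProjOnto Hminus Pi) (w : H) :
    -(‖P‖ * ‖Pi w‖ ^ 2) ≤ ⟪P w, w⟫ := by
  set a := w - Pi w with ha_def
  set b := Pi w with hb_def
  have hb : b ∈ Hminus := hPi.1 w
  have hao : a ∈ Hminusᗮ := hPi.2 w
  have hHm : Hminusᗮ = Hplus := by
    rw [h1.orth, Submodule.orthogonal_orthogonal_eq_closure,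
      IsClosed.submodule_topologicalClosure_eq h1.closed_plus]
  have ha : a ∈ Hplus := hHm ▸ hao
  have hPa : P a ∈ Hplus := h1.inv_plus a ha
  have hPb : P b ∈ Hminus := h1.inv_minus b hb
  have h₁ : ⟪P a, b⟫ = 0 := by
    have hb' : b ∈ Hplusᗮ := h1.orth ▸ hb
    exact (Submodule.mem_orthogonal _ b).1 hb' (P a) hPa
  have h₂ : ⟪P b, a⟫ = 0 := (Submodule.mem_orthogonal _ a).1 hao (P b) hPb
  have hw : w = a + b := by simp [ha_def, hb_def]
  have expand : ⟪P w, w⟫ = ⟪P a, a⟫ + ⟪P b, b⟫ := by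
    rw [hw, map_add, inner_add_left, inner_add_right, inner_add_right, h₁, h₂]; ring
  have hpa : 0 ≤ ⟪P a, a⟫ := by
    rcases eq_or_ne a 0 with h | h
    · simp [h]
    · exact le_of_lt (h1.pos a ha h)
  have hpb : -(‖P‖ * ‖b‖ ^ 2) ≤ ⟪P b, b⟫ := by
    have := absV_le' P b
    have := neg_abs_le (⟪P b, b⟫)
    linarith
  rw [expand]; linarith

lemma exists_small {f : ℝ → ℝ} {c : ℝ} (hf : IntegrableOn f (Iic c))
    {ε : ℝ} (hε : 0 < ε) : ∃ s ≤ c, f s < ε := by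
  by_contra h
  push_neg at h
  have hconst : IntegrableOn (fun _ : ℝ => ε) (Iic c) := by
    refine hf.mono' aestronglyMeasurable_const ?_
    filter_upwards [ae_restrict_mem measurableSet_Iic] with s hs
    rw [Real.norm_eq_abs, abs_of_pos hε]
    exact h s hs
  rw [integrableOn_const_iff] at hconst
  rcases hconst with h1 | h1
  · exact hε.ne' (enorm_eq_zero.1 h1)
  · rw [Real.volume_Iic] at h1; exact (lt_irrefl _ h1).elim

lemma integrableOn_comp_sub {G : ℝ → ℝ} {t c : ℝ} (h : IntegrableOn G (Iic (c - t))) :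
    IntegrableOn (fun s => G (s - t)) (Iic c) := by
  rw [← integrable_indicator_iff measurableSet_Iic] at h ⊢
  have heq : (Iic c).indicator (fun s => G (s - t)) =
      fun s => (Iic (c - t)).indicator G (s - t) := by
    funext s
    by_cases hs : s ≤ c
    · have hs' : s - t ≤ c - t := by linarith
      simp [indicator, mem_Iic, hs, hs']
    · have hs' : ¬ s - t ≤ c - t := by intro hh; exact hs (by linarith)
      simp [indicator, mem_Iic, hs, hs']
  rw [heq]
  exact h.comp_sub_right t

lemma exists_small_on_interval {g : ℝ → ℝ} (hg : Continuous g) :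
    ∃ τ ∈ Icc (-2:ℝ) (-1), g τ ≤ ∫ σ in (-2:ℝ)..(-1), g σ := by
  obtain ⟨τ, hτ, hmin⟩ := isCompact_Icc.exists_isMinOn (nonempty_Icc.2 (by norm_num : (-2:ℝ) ≤ -1))
    hg.continuousOn
  refine ⟨τ, hτ, ?_⟩
  have h : (∫ σ in (-2:ℝ)..(-1), (fun _ : ℝ => g τ) σ) ≤ ∫ σ in (-2:ℝ)..(-1), g σ := by
    apply intervalIntegral.integral_mono_on (by norm_num : (-2:ℝ) ≤ -1)
      intervalIntegrable_const (hg.intervalIntegrable _ _)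
    intro x hx
    exact hmin hx
  rw [intervalIntegral.integral_const, smul_eq_mul] at h
  norm_num at h
  exact h

lemma traj_diff_ineq (ψ : ℝ → ℝ → H → H)
    (hψ0 : ∀ (q : ℝ) (u : H), ψ 0 q u = u)
    (P : H →L[ℝ] H) (δ ν : ℝ)
    (hineq : ∀ (q : ℝ) (u v : H) (l r : ℝ), 0 ≤ l → l ≤ r →
      Real.exp (2 * ν * r) * ⟪P (ψ r q u - ψ r q v), ψ r q u - ψ r q v⟫ -
        Real.exp (2 * ν * l) * ⟪P (ψ l q u - ψ l q v), ψ l q u - ψ l q v⟫ ≤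
        -δ * ∫ s in l..r, Real.exp (2 * ν * s) * ‖ψ s q u - ψ s q v‖ ^ 2)
    {q : ℝ} {u v : ℝ → H}
    (hu : IsCompleteTraj (fun t q => q + t) ψ q u)
    (hv : IsCompleteTraj (fun t q => q + t) ψ q v)
    {s t : ℝ} (hst : s ≤ t) :
    Real.exp (2 * ν * t) * ⟪P (u t - v t), u t - v t⟫ -
      Real.exp (2 * ν * s) * ⟪P (u s - v s), u s - v s⟫ ≤
      -δ * ∫ σ in s..t, Real.exp (2 * ν * σ) * ‖u σ - v σ‖ ^ 2 := by
  have key := hineq (q + s) (u s) (v s) 0 (t - s) le_rfl (by linarith)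
  have hut : ψ (t - s) (q + s) (u s) = u t := by
    have h := hu.2 (t - s) s (by linarith)
    rw [show (t - s) + s = t by ring] at h
    exact h.symm
  have hvt : ψ (t - s) (q + s) (v s) = v t := by
    have h := hv.2 (t - s) s (by linarith)
    rw [show (t - s) + s = t by ring] at h
    exact h.symm
  rw [hut, hvt, hψ0, hψ0] at key
  have hintc : (∫ σ in (0:ℝ)..(t - s), Real.exp (2 * ν * σ) *
        ‖ψ σ (q + s) (u s) - ψ σ (q + s) (v s)‖ ^ 2)
      = ∫ σ in (0:ℝ)..(t - s), Real.exp (2 * ν * σ) * ‖u (σ + s) - v (σ + s)‖ ^ 2 := by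
    apply intervalIntegral.integral_congr
    intro σ hσ
    rw [uIcc_of_le (by linarith : (0:ℝ) ≤ t - s)] at hσ
    simp only [hu.2 σ s hσ.1, hv.2 σ s hσ.1]
  rw [hintc] at key
  have hmul := mul_le_mul_of_nonneg_left key (Real.exp_pos (2 * ν * s)).le
  have e1 : Real.exp (2 * ν * s) * Real.exp (2 * ν * (t - s)) = Real.exp (2 * ν * t) := by
    rw [← Real.exp_add]; ring_nf
  have e2 : Real.exp (2 * ν * s) *
        (∫ σ in (0:ℝ)..(t - s), Real.exp (2 * ν * σ) * ‖u (σ + s) - v (σ + s)‖ ^ 2)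
      = ∫ σ in s..t, Real.exp (2 * ν * σ) * ‖u σ - v σ‖ ^ 2 := by
    rw [← intervalIntegral.integral_const_mul]
    have h' : (∫ σ in (0:ℝ)..(t - s), Real.exp (2 * ν * s) *
          (Real.exp (2 * ν * σ) * ‖u (σ + s) - v (σ + s)‖ ^ 2))
        = ∫ σ in (0:ℝ)..(t - s),
            (fun x => Real.exp (2 * ν * x) * ‖u x - v x‖ ^ 2) (σ + s) := by
      apply intervalIntegral.integral_congr
      intro σ _
      simp only
      rw [← mul_assoc, ← Real.exp_add]
      ring_nf
    rw [h', intervalIntegral.integral_comp_add_right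
      (fun x => Real.exp (2 * ν * x) * ‖u x - v x‖ ^ 2) s]
    norm_num
  have e0 : Real.exp (2 * ν * 0) = 1 := by norm_num
  rw [e0] at hmul
  calc Real.exp (2 * ν * t) * ⟪P (u t - v t), u t - v t⟫ -
      Real.exp (2 * ν * s) * ⟪P (u s - v s), u s - v s⟫
      = Real.exp (2 * ν * s) * (Real.exp (2 * ν * (t - s)) * ⟪P (u t - v t), u t - v t⟫ -
        1 * ⟪P (u s - v s), u s - v s⟫) := by rw [mul_sub, ← mul_assoc, e1]; ring
    _ ≤ Real.exp (2 * ν * s) * (-δ * ∫ σ in (0:ℝ)..(t - s),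
        Real.exp (2 * ν * σ) * ‖u (σ + s) - v (σ + s)‖ ^ 2) := hmul
    _ = -δ * ∫ σ in s..t, Real.exp (2 * ν * σ) * ‖u σ - v σ‖ ^ 2 := by
        rw [← e2]; ring

lemma key_bound (ψ : ℝ → ℝ → H → H)
    (hψ0 : ∀ (q : ℝ) (u : H), ψ 0 q u = u)
    (P : H →L[ℝ] H) {Hplus Hminus : Submodule ℝ H} (h1 : HypH1 P Hplus Hminus)
    {δ ν : ℝ} (hδ : 0 < δ)
    (hineq : ∀ (q : ℝ) (u v : H) (l r : ℝ), 0 ≤ l → l ≤ r →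
      Real.exp (2 * ν * r) * ⟪P (ψ r q u - ψ r q v), ψ r q u - ψ r q v⟫ -
        Real.exp (2 * ν * l) * ⟪P (ψ l q u - ψ l q v), ψ l q u - ψ l q v⟫ ≤
        -δ * ∫ s in l..r, Real.exp (2 * ν * s) * ‖ψ s q u - ψ s q v‖ ^ 2)
    {Pi : H →L[ℝ] H} (hPi : IsOrthProjOnto Hminus Pi)
    {q : ℝ} {u v : ℝ → H}
    (hu : IsCompleteTraj (fun t q => q + t) ψ q u)
    (hv : IsCompleteTraj (fun t q => q + t) ψ q v)
    (hint : IntegrableOn (fun s => Real.exp (2 * ν * s) * ‖u s - v s‖ ^ 2) (Iic (-2)))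
    {T : ℝ} (hT : -1 ≤ T) :
    δ * ∫ σ in (-2:ℝ)..(-1), Real.exp (2 * ν * σ) * ‖u σ - v σ‖ ^ 2
      ≤ Real.exp (2 * ν * T) * (‖P‖ * ‖Pi (u T - v T)‖ ^ 2) := by
  apply le_of_forall_pos_le_add
  intro ε hε
  obtain ⟨s, hs2, hsmall⟩ := exists_small hint
    (div_pos hε (by positivity : (0:ℝ) < ‖P‖ + 1))
  have hB := traj_diff_ineq ψ hψ0 P δ ν hineq hu hv (show s ≤ T by linarith)
  have hcont : Continuous (fun σ : ℝ => Real.exp (2 * ν * σ) * ‖u σ - v σ‖ ^ 2) := by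
    have : Continuous (fun σ : ℝ => u σ - v σ) := hu.1.sub hv.1
    continuity
  have hmono : (∫ σ in (-2:ℝ)..(-1), Real.exp (2 * ν * σ) * ‖u σ - v σ‖ ^ 2)
      ≤ ∫ σ in s..T, Real.exp (2 * ν * σ) * ‖u σ - v σ‖ ^ 2 :=
    intervalIntegral.integral_mono_interval hs2 (by norm_num) (by linarith)
      (Eventually.of_forall fun σ => by positivity) (hcont.intervalIntegrable s T)
  have hVs : Real.exp (2 * ν * s) * ⟪P (u s - v s), u s - v s⟫ ≤
      ‖P‖ * (Real.exp (2 * ν * s) * ‖u s - v s‖ ^ 2) := by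
    have h1' := absV_le' P (u s - v s)
    have h2' := le_abs_self (⟪P (u s - v s), u s - v s⟫)
    nlinarith [Real.exp_pos (2 * ν * s)]
  have hVT := V_ge h1 hPi (u T - v T)
  have hεb : ‖P‖ * (Real.exp (2 * ν * s) * ‖u s - v s‖ ^ 2) ≤ ε := by
    have hnn : (0:ℝ) ≤ Real.exp (2 * ν * s) * ‖u s - v s‖ ^ 2 := by positivity
    have hPnn : (0:ℝ) ≤ ‖P‖ := norm_nonneg _
    have hcancel : (‖P‖ + 1) * (ε / (‖P‖ + 1)) = ε := by field_simp
    nlinarith [hsmall]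
  have hmul := mul_le_mul_of_nonneg_left hmono hδ.le
  have hT1 : -(Real.exp (2 * ν * T) * ⟪P (u T - v T), u T - v T⟫) ≤
      Real.exp (2 * ν * T) * (‖P‖ * ‖Pi (u T - v T)‖ ^ 2) := by
    nlinarith [Real.exp_pos (2 * ν * T), hVT]
  linarith [hB, hmul, hVs, hT1, hεb]

end AuxLemmas

set_option maxHeartbeats 1600000 in
/-- Proposition 1: under (H1), (H3), (H4), if `Π` maps each amenable set onto `H⁻` and the
driving system is the shift flow on `ℝ`, then the map `Φ` (sending `(q, ζ)` to the unique
point of `𝔄(q)` projecting to `ζ`) is continuous. -/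
theorem Phi_continuous_shift_flow
    {H : Type*} [NormedAddCommGroup H] [InnerProductSpace ℝ H]
    [CompleteSpace H] [TopologicalSpace.SeparableSpace H]
    (ψ : ℝ → ℝ → H → H)
    (hcoc : IsCocycle (fun t q => q + t) ψ)
    (P : H →L[ℝ] H) (Hplus Hminus : Submodule ℝ H)
    (h1 : HypH1 P Hplus Hminus)
    (δ ν : ℝ) (h3 : HypH3 ψ P δ ν)
    (h4 : ∀ q : ℝ, (amenSet (fun t q => q + t) ψ ν q).Nonempty)
    (Pi : H →L[ℝ] H) (hPi : IsOrthProjOnto Hminus Pi)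
    (honto : ∀ q : ℝ, Pi '' (amenSet (fun t q => q + t) ψ ν q) = (Hminus : Set H))
    (Φ : ℝ → ↥Hminus → H)
    (hΦmem : ∀ (q : ℝ) (ζ : ↥Hminus), Φ q ζ ∈ amenSet (fun t q => q + t) ψ ν q)
    (hΦproj : ∀ (q : ℝ) (ζ : ↥Hminus), Pi (Φ q ζ) = (ζ : H)) :
    Continuous fun p : ℝ × ↥Hminus => Φ p.1 p.2 := by
  obtain ⟨hδ, hν, hineq⟩ := h3
  obtain ⟨hψ0, hψadd, hψcont⟩ := hcoc
  rw [continuous_iff_seqContinuous]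
  intro pn p hpn
  simp only [Function.comp]
  obtain ⟨u, hu, huA, hu0⟩ := hΦmem p.1 p.2
  choose un hun hunA hun0 using fun n => hΦmem (pn n).1 (pn n).2
  set t : ℕ → ℝ := fun n => (pn n).1 - p.1 with ht_def
  have hq1 : Tendsto (fun n => (pn n).1) atTop (𝓝 p.1) :=
    (continuous_fst.tendsto p).comp hpn
  have htt : Tendsto t atTop (𝓝 0) := by
    have := hq1.sub_const p.1
    simpa [ht_def] using this
  have hζ : Tendsto (fun n => ((pn n).2 : H)) atTop (𝓝 (p.2 : H)) :=
    (continuous_subtype_val.tendsto p.2).comp ((continuous_snd.tendsto p).comp hpn)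
  -- shifted trajectories at the base point p.1
  set ut : ℕ → ℝ → H := fun n s => un n (s - t n) with hut_def
  have hutraj : ∀ n, IsCompleteTraj (fun t q => q + t) ψ p.1 (ut n) := by
    intro n
    refine ⟨(hun n).1.comp (continuous_id.sub continuous_const), ?_⟩
    intro a b ha
    have h := (hun n).2 a (b - t n) ha
    simp only [hut_def]
    rw [show a + b - t n = a + (b - t n) by ring, h]
    congr 1
    simp only [ht_def]; ring
  -- continuity facts
  have hwcont : ∀ n, Continuous (fun s => ut n s - u s) := fun n =>
    ((hutraj n).1).sub hu.1
  have hfcont : ∀ n, Continuous (fun s => Real.exp (2 * ν * s) * ‖ut n s - u s‖ ^ 2) := by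
    intro n
    have := hwcont n
    continuity
  -- integrability on Iic (-2)
  have hfint : ∀ n, -2 ≤ t n →
      IntegrableOn (fun s => Real.exp (2 * ν * s) * ‖ut n s - u s‖ ^ 2) (Iic (-2)) := by
    intro n hn
    have hbase : IntegrableOn (fun s : ℝ => Real.exp (2 * ν * s) * ‖un n s‖ ^ 2)
        (Iic (-2 - t n)) := (hunA n).mono_set (Iic_subset_Iic.2 (by linarith))
    have hg1' : IntegrableOn
        (fun s => Real.exp (2 * ν * (s - t n)) * ‖un n (s - t n)‖ ^ 2) (Iic (-2)) :=
      integrableOn_comp_sub (G := fun s : ℝ => Real.exp (2 * ν * s) * ‖un n s‖ ^ 2)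
        (t := t n) (c := -2) hbase
    have hg1 : IntegrableOn
        (fun s => Real.exp (2 * ν * t n) *
          (Real.exp (2 * ν * (s - t n)) * ‖un n (s - t n)‖ ^ 2)) (Iic (-2)) :=
      hg1'.const_mul _
    have hg2 : IntegrableOn (fun s => Real.exp (2 * ν * s) * ‖u s‖ ^ 2) (Iic (-2)) :=
      huA.mono_set (Iic_subset_Iic.2 (by norm_num))
    apply Integrable.mono' (((hg1.const_mul 2).add (hg2.const_mul 2)))
      ((hfcont n).aestronglyMeasurable)
    apply Eventually.of_forall
    intro s
    have hexp : Real.exp (2 * ν * t n) * Real.exp (2 * ν * (s - t n)) =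
        Real.exp (2 * ν * s) := by
      rw [← Real.exp_add]; ring_nf
    have hnormsq : ‖ut n s - u s‖ ^ 2 ≤ 2 * ‖ut n s‖ ^ 2 + 2 * ‖u s‖ ^ 2 := by
      have h := norm_sub_le (ut n s) (u s)
      nlinarith [norm_nonneg (ut n s), norm_nonneg (u s), norm_nonneg (ut n s - u s),
        sq_nonneg (‖ut n s‖ - ‖u s‖)]
    have hb : Real.exp (2 * ν * s) * ‖ut n s - u s‖ ^ 2 ≤
        2 * (Real.exp (2 * ν * t n) * (Real.exp (2 * ν * (s - t n)) * ‖un n (s - t n)‖ ^ 2)) +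
          2 * (Real.exp (2 * ν * s) * ‖u s‖ ^ 2) := by
      have he : Real.exp (2 * ν * t n) * (Real.exp (2 * ν * (s - t n)) *
          ‖un n (s - t n)‖ ^ 2) = Real.exp (2 * ν * s) * ‖ut n s‖ ^ 2 := by
        rw [← mul_assoc, hexp]
      rw [he]
      have hm := mul_le_mul_of_nonneg_left hnormsq (Real.exp_pos (2 * ν * s)).le
      nlinarith [hm]
    rw [Real.norm_eq_abs, abs_of_nonneg (by positivity)]
    exact hb
  -- the key quantitative bound
  have key1 : ∀ n, -1 ≤ t n →
      δ * ∫ σ in (-2:ℝ)..(-1), Real.exp (2 * ν * σ) * ‖ut n σ - u σ‖ ^ 2 ≤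
        Real.exp (2 * ν * t n) * (‖P‖ * ‖((pn n).2 : H) - Pi (u (t n))‖ ^ 2) := by
    intro n hn
    have hkb := key_bound ψ hψ0 P h1 hδ hineq hPi (hutraj n) hu
      (hfint n (by linarith)) hn
    have hPiw : Pi (ut n (t n) - u (t n)) = ((pn n).2 : H) - Pi (u (t n)) := by
      have h0 : ut n (t n) = un n 0 := by simp [hut_def]
      rw [map_sub, h0, hun0 n, hΦproj]
    rwa [hPiw] at hkb
  -- choose minimizing points
  choose τ hτmem hτle using fun n => exists_small_on_interval (hfcont n)
  -- the squared norms at the minimizing points tend to zero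
  have hc : Tendsto (fun n => Real.exp (2 * ν * t n) *
      (‖P‖ * ‖((pn n).2 : H) - Pi (u (t n))‖ ^ 2)) atTop (𝓝 0) := by
    have h1' : Tendsto (fun n => u (t n)) atTop (𝓝 (u 0)) := (hu.1.tendsto 0).comp htt
    have h2' : Tendsto (fun n => ((pn n).2 : H) - Pi (u (t n))) atTop
        (𝓝 ((p.2 : H) - Pi (u 0))) := hζ.sub ((Pi.continuous.tendsto _).comp h1')
    have h3' : (p.2 : H) - Pi (u 0) = 0 := by rw [hu0, hΦproj]; simp
    rw [h3'] at h2'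
    have h4' : Tendsto (fun n => Real.exp (2 * ν * t n)) atTop (𝓝 1) := by
      have h5 : Tendsto (fun n => 2 * ν * t n) atTop (𝓝 0) := by
        have := htt.const_mul (2 * ν)
        simpa using this
      have := (Real.continuous_exp.tendsto 0).comp h5
      simpa [Function.comp_def] using this
    have := h4'.mul (((h2'.norm).pow 2).const_mul ‖P‖)
    simpa using this
  have hwsq : Tendsto (fun n => ‖ut n (τ n) - u (τ n)‖ ^ 2) atTop (𝓝 0) := by
    apply squeeze_zero' (Eventually.of_forall fun n => by positivity)
      (g := fun n => Real.exp (4 * ν) * ((Real.exp (2 * ν * t n) *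
        (‖P‖ * ‖((pn n).2 : H) - Pi (u (t n))‖ ^ 2)) / δ))
    · have hev : ∀ᶠ n in atTop, -1 ≤ t n := by
        have := htt.eventually (eventually_gt_nhds (show (-1:ℝ) < 0 by norm_num))
        filter_upwards [this] with n hn using hn.le
      filter_upwards [hev] with n hn
      have hk := key1 n hn
      have hfτ : Real.exp (2 * ν * τ n) * ‖ut n (τ n) - u (τ n)‖ ^ 2 ≤
          (Real.exp (2 * ν * t n) * (‖P‖ * ‖((pn n).2 : H) - Pi (u (t n))‖ ^ 2)) / δ := by
        have h6 := hτle n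
        rw [le_div_iff₀ hδ]
        calc (Real.exp (2 * ν * τ n) * ‖ut n (τ n) - u (τ n)‖ ^ 2) * δ
            = δ * (Real.exp (2 * ν * τ n) * ‖ut n (τ n) - u (τ n)‖ ^ 2) := by ring
          _ ≤ δ * ∫ σ in (-2:ℝ)..(-1), Real.exp (2 * ν * σ) * ‖ut n σ - u σ‖ ^ 2 :=
              mul_le_mul_of_nonneg_left h6 hδ.le
          _ ≤ _ := hk
      have hτ2 : -2 ≤ τ n := (hτmem n).1
      have hexpτ : Real.exp (-(2 * ν * τ n)) ≤ Real.exp (4 * ν) :=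
        Real.exp_le_exp.2 (by nlinarith)
      have hsplit : ‖ut n (τ n) - u (τ n)‖ ^ 2 = Real.exp (-(2 * ν * τ n)) *
          (Real.exp (2 * ν * τ n) * ‖ut n (τ n) - u (τ n)‖ ^ 2) := by
        rw [← mul_assoc, ← Real.exp_add]
        simp
      rw [hsplit]
      have hnn : 0 ≤ Real.exp (2 * ν * τ n) * ‖ut n (τ n) - u (τ n)‖ ^ 2 := by positivity
      calc Real.exp (-(2 * ν * τ n)) * (Real.exp (2 * ν * τ n) * ‖ut n (τ n) - u (τ n)‖ ^ 2)
          ≤ Real.exp (4 * ν) * (Real.exp (2 * ν * τ n) * ‖ut n (τ n) - u (τ n)‖ ^ 2) :=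
            mul_le_mul_of_nonneg_right hexpτ hnn
        _ ≤ Real.exp (4 * ν) * ((Real.exp (2 * ν * t n) *
            (‖P‖ * ‖((pn n).2 : H) - Pi (u (t n))‖ ^ 2)) / δ) :=
            mul_le_mul_of_nonneg_left hfτ (Real.exp_pos _).le
    · have := (hc.div_const δ).const_mul (Real.exp (4 * ν))
      simpa using this
  have hwn0 : Tendsto (fun n => ut n (τ n) - u (τ n)) atTop (𝓝 0) := by
    rw [tendsto_zero_iff_norm_tendsto_zero]
    have hsqrt := hwsq.sqrt
    have h2 := hsqrt.congr (fun n => Real.sqrt_sq (norm_nonneg (ut n (τ n) - u (τ n))))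
    simpa using h2
  -- subsequence argument
  apply tendsto_of_subseq_tendsto
  intro ns hns
  obtain ⟨a, ha, φ, hφ, hτa⟩ := isCompact_Icc.tendsto_subseq (fun m => hτmem (ns m))
  refine ⟨φ, ?_⟩
  have hk : Tendsto (fun m => ns (φ m)) atTop atTop := hns.comp hφ.tendsto_atTop
  have htk : Tendsto (fun m => t (ns (φ m))) atTop (𝓝 0) := htt.comp hk
  have hwk : Tendsto (fun m => ut (ns (φ m)) (τ (ns (φ m))) - u (τ (ns (φ m)))) atTop
      (𝓝 0) := hwn0.comp hk
  have hτk : Tendsto (fun m => τ (ns (φ m))) atTop (𝓝 a) := hτa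
  have hva : Tendsto (fun m => u (τ (ns (φ m)))) atTop (𝓝 (u a)) :=
    (hu.1.tendsto a).comp hτk
  have hua : Tendsto (fun m => ut (ns (φ m)) (τ (ns (φ m)))) atTop (𝓝 (u a)) := by
    have := hwk.add hva
    simpa using this
  have ha1 : a ≤ -1 := ha.2
  have hψat : ContinuousAt (fun pr : ℝ × ℝ × H => ψ pr.1 pr.2.1 pr.2.2)
      (-a, p.1 + a, u a) := by
    apply hψcont.continuousAt
    have hopen : IsOpen {pr : ℝ × ℝ × H | 0 < pr.1} :=
      isOpen_lt (continuous_const : Continuous fun _ : ℝ × ℝ × H => (0:ℝ)) continuous_fst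
    have hmem : ((-a, p.1 + a, u a) : ℝ × ℝ × H) ∈ {pr : ℝ × ℝ × H | 0 < pr.1} := by
      show (0:ℝ) < -a
      linarith
    apply mem_of_superset (hopen.mem_nhds hmem)
    intro x hx
    show (0:ℝ) ≤ x.1
    exact le_of_lt hx
  have hseq : Tendsto (fun m => ((t (ns (φ m)) - τ (ns (φ m)), p.1 + τ (ns (φ m)),
      ut (ns (φ m)) (τ (ns (φ m)))) : ℝ × ℝ × H)) atTop (𝓝 (-a, p.1 + a, u a)) := by
    apply Tendsto.prodMk_nhds
    · have := htk.sub hτk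
      simpa using this
    apply Tendsto.prodMk_nhds
    · have := hτk.const_add p.1
      simpa using this
    · exact hua
  have hcomp := hψat.tendsto.comp hseq
  have hlim : ψ (-a) (p.1 + a) (u a) = Φ p.1 p.2 := by
    have h := hu.2 (-a) a (by linarith)
    rw [show -a + a = 0 by ring] at h
    rw [← hu0, h]
  simp only [Function.comp] at hcomp
  rw [hlim] at hcomp
  have hev : ∀ᶠ m in atTop, ψ (t (ns (φ m)) - τ (ns (φ m))) (p.1 + τ (ns (φ m)))
      (ut (ns (φ m)) (τ (ns (φ m)))) = Φ (pn (ns (φ m))).1 (pn (ns (φ m))).2 := by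
    have hev1 : ∀ᶠ m in atTop, -1 ≤ t (ns (φ m)) := by
      have := htk.eventually (eventually_gt_nhds (show (-1:ℝ) < 0 by norm_num))
      filter_upwards [this] with m hm using hm.le
    filter_upwards [hev1] with m hm
    have hτm := hτmem (ns (φ m))
    have h0 : 0 ≤ t (ns (φ m)) - τ (ns (φ m)) := by
      have := hτm.2; linarith
    have h := (hutraj (ns (φ m))).2 (t (ns (φ m)) - τ (ns (φ m))) (τ (ns (φ m))) h0
    rw [show (t (ns (φ m)) - τ (ns (φ m))) + τ (ns (φ m)) = t (ns (φ m)) by ring] at h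
    rw [← h]
    have h0' : ut (ns (φ m)) (t (ns (φ m))) = un (ns (φ m)) 0 := by simp [hut_def]
    rw [h0', hun0]
  exact hcomp.congr' hev
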